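/- Let G be a (banner, odd hole)-free graph with a homogeneous set H, let k be a positive integer, and let F be a graph whose vertex set is the disjoint union of V(G) − H and a k-element set K, such that: F induces the same graph as G on V(G) − H, K is a clique of F, and a vertex v ∈ V(G) − H is adjacent in F to the vertices of K if and only if v is adjacent in G to the vertices of H (in which case it is adjacent to all of K, otherwise to none). Then F is (banner, odd hole)-free. -/

import Mathlib

open SimpleGraph

/-- The banner: a chordless 4-cycle 0-1-2-3-0 together with a fifth vertex 4
adjacent to exactly one vertex (vertex 0) of the cycle. -/
def banner : SimpleGraph (Fin 5) :=
  SimpleGraph.fromRel (fun i j =>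
    (i = 0 ∧ j = 1) ∨ (i = 1 ∧ j = 2) ∨ (i = 2 ∧ j = 3) ∨ (i = 3 ∧ j = 0) ∨ (i = 0 ∧ j = 4))

/-- A graph is banner-free if it has no induced subgraph isomorphic to the banner. -/
def BannerFree {V : Type*} (G : SimpleGraph V) : Prop := ¬ Nonempty (banner ↪g G)

/-- A graph is C5-free if it has no induced subgraph isomorphic to the chordless 5-cycle. -/
def C5Free {V : Type*} (G : SimpleGraph V) : Prop :=
  ¬ Nonempty (SimpleGraph.cycleGraph 5 ↪g G)

/-- A graph is odd-hole-free if it has no induced chordless cycle of odd length `n ≥ 5`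
(odd holes are the odd chordless cycles with at least four, hence at least five, vertices). -/
def OddHoleFree {V : Type*} (G : SimpleGraph V) : Prop :=
  ∀ n : ℕ, 5 ≤ n → Odd n → ¬ Nonempty (SimpleGraph.cycleGraph n ↪g G)

/-- `A` is an odd antihole of `G`: the subgraph induced by `A` is isomorphic to the
complement of a chordless cycle on an odd number `n ≥ 5` of vertices. -/
def IsOddAntihole {V : Type*} (G : SimpleGraph V) (A : Set V) : Prop :=
  ∃ n : ℕ, 5 ≤ n ∧ Odd n ∧ Nonempty ((SimpleGraph.cycleGraph n)ᶜ ≃g G.induce A)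

/-- `H` is a homogeneous set of `G`: `2 ≤ |H| < |V(G)|` and every vertex outside `H`
is adjacent to all vertices of `H` or to none of them. -/
def IsHomogeneous {V : Type*} (G : SimpleGraph V) (H : Set V) : Prop :=
  2 ≤ H.ncard ∧ H ≠ Set.univ ∧
    ∀ v ∉ H, (∀ h ∈ H, G.Adj v h) ∨ (∀ h ∈ H, ¬ G.Adj v h)

/-- A graph is perfect if every induced subgraph has chromatic number equal to
its clique number. -/
def IsPerfect {V : Type*} (G : SimpleGraph V) : Prop :=
  ∀ S : Set V, (G.induce S).chromaticNumber = ((G.induce S).cliqueNum : ℕ∞)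

/-- A graph is perfectly divisible if every induced subgraph `G[S]` contains a set `X`
of vertices meeting all largest cliques of `G[S]` and inducing a perfect graph. -/
def PerfectlyDivisible {V : Type*} (G : SimpleGraph V) : Prop :=
  ∀ S : Set V, ∃ X ⊆ S, IsPerfect (G.induce X) ∧
    ∀ t : Finset V, ↑t ⊆ S → G.IsNClique ((G.induce S).cliqueNum) t → ∃ x ∈ X, x ∈ t

/-- A graph is `k`-divisible if the vertex set of each of its induced subgraphs `G[S]`
having at least one edge can be partitioned into `k` sets, none of which contains a
clique of size `ω(G[S])`.  (A graph with no edges is trivially `k`-divisible.) -/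
def KDivisible {V : Type*} (G : SimpleGraph V) (k : ℕ) : Prop :=
  ∀ S : Set V, (∃ a ∈ S, ∃ b ∈ S, G.Adj a b) →
    ∃ P : Fin k → Set V, (∀ v ∈ S, ∃! i, v ∈ P i) ∧
      ∀ i, P i ⊆ S ∧ ¬ ∃ t : Finset V, ↑t ⊆ P i ∧ G.IsNClique ((G.induce S).cliqueNum) t

/-- The maximum total weight `α_w(G)` of a stable (independent) set of the weighted
graph `G`; stable sets of `G` are exactly the cliques of the complement of `G`. -/
noncomputable def alphaW {V : Type*} (G : SimpleGraph V) (w : V → ℤ) : ℤ :=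
  sSup {x : ℤ | ∃ s : Finset V, Gᶜ.IsClique (↑s : Set V) ∧ x = ∑ v ∈ s, w v}

/-- `C` is a clique cutset of the connected graph `G` if `C` is a clique and
deleting `C` from `G` leaves a disconnected graph. -/
def IsCliqueCutset {V : Type*} (G : SimpleGraph V) (C : Set V) : Prop :=
  G.Connected ∧ G.IsClique C ∧ ¬ (G.induce Cᶜ).Preconnected


/-- In the banner and in long cycles, every edge is "distinguished" by a third vertex. -/
def EdgeDistinguished {W : Type*} (X : SimpleGraph W) : Prop :=
  ∀ x y : W, X.Adj x y → ∃ z : W, z ≠ x ∧ z ≠ y ∧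
    ((X.Adj z x ∧ ¬ X.Adj z y) ∨ (X.Adj z y ∧ ¬ X.Adj z x))

instance : DecidableRel banner.Adj := fun a b =>
  decidable_of_iff _ (SimpleGraph.fromRel_adj _ a b).symm

lemma banner_edgeDistinguished : EdgeDistinguished banner := by
  unfold EdgeDistinguished; decide

open Fin.CommRing in
lemma cycle_edgeDistinguished (n : ℕ) (hn : 5 ≤ n) :
    EdgeDistinguished (SimpleGraph.cycleGraph n) := by
  obtain ⟨m, rfl⟩ : ∃ m, n = m + 2 := ⟨n - 2, by omega⟩
  have hm : 3 ≤ m := by omega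
  have v1 : (1 : Fin (m+2)).val = 1 := Fin.val_one m
  have v2 : (2 : Fin (m+2)).val = 2 := by
    rw [show (2:Fin (m+2)) = 1+1 by norm_num, Fin.add_def]
    simp [v1]; omega
  have v3 : (3 : Fin (m+2)).val = 3 := by
    rw [show (3:Fin (m+2)) = 2+1 by norm_num, Fin.add_def]
    simp [v1, v2]; omega
  have n10 : (1 : Fin (m+2)) ≠ 0 := by
    intro h; rw [Fin.ext_iff] at h; simp [v1] at h
  have n20 : (2 : Fin (m+2)) ≠ 0 := by
    intro h; rw [Fin.ext_iff] at h; rw [v2] at h; simp at h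
  have n21 : (2 : Fin (m+2)) ≠ 1 := by
    intro h; rw [Fin.ext_iff] at h; rw [v1, v2] at h; omega
  have n30 : (3 : Fin (m+2)) ≠ 0 := by
    intro h; rw [Fin.ext_iff] at h; rw [v3] at h; simp at h
  intro u v hadj
  rw [SimpleGraph.cycleGraph_adj] at hadj
  refine ⟨u - (v - u), ?_, ?_, Or.inl ⟨?_, ?_⟩⟩
  · -- z ≠ u
    intro h
    have h' : v - u = 0 := by linear_combination -h
    rcases hadj with h1 | h1
    · exact n10 (by linear_combination -h1 - h')
    · exact n10 (by linear_combination -h1 + h')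
  · -- z ≠ v
    intro h
    rcases hadj with h1 | h1
    · exact n20 (by linear_combination h - 2*h1)
    · exact n20 (by linear_combination -h - 2*h1)
  · -- Adj z u
    rw [SimpleGraph.cycleGraph_adj]
    rcases hadj with h1 | h1
    · exact Or.inl (by linear_combination h1)
    · exact Or.inr (by linear_combination h1)
  · -- ¬ Adj z v
    rw [SimpleGraph.cycleGraph_adj]
    rintro (h1 | h1) <;> rcases hadj with h2 | h2
    · exact n21 (by linear_combination h1 - 2*h2)
    · exact n30 (by linear_combination -h1 - 2*h2)
    · exact n30 (by linear_combination -h1 - 2*h2)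
    · exact n21 (by linear_combination h1 - 2*h2)

lemma key_transfer {V : Type*} {G : SimpleGraph V} {H : Set V} (hH : IsHomogeneous G H)
    {k : ℕ} {F : SimpleGraph (↥(Hᶜ) ⊕ Fin k)}
    (hFout : ∀ u v : ↥(Hᶜ), F.Adj (Sum.inl u) (Sum.inl v) ↔ G.Adj ↑u ↑v)
    (hFK : ∀ i j : Fin k, F.Adj (Sum.inr i) (Sum.inr j) ↔ i ≠ j)
    (hFcross : ∀ (v : ↥(Hᶜ)) (i : Fin k),
      F.Adj (Sum.inl v) (Sum.inr i) ↔ ∀ h ∈ H, G.Adj ↑v h)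
    {W : Type*} {X : SimpleGraph W} (hX : EdgeDistinguished X)
    (f : X ↪g F) : Nonempty (X ↪g G) := by
  obtain ⟨h0, h0H⟩ : H.Nonempty := by
    rcases hH with ⟨h2, -, -⟩
    exact Set.nonempty_of_ncard_ne_zero (by omega)
  have hvH : ∀ v : ↥(Hᶜ), (v : V) ∉ H := fun v => v.2
  have hcrossG : ∀ v : ↥(Hᶜ), G.Adj ↑v h0 ↔ ∀ h ∈ H, G.Adj ↑v h := by
    intro v
    constructor
    · intro hadj h hh
      rcases hH.2.2 ↑v (hvH v) with hall | hnone
      · exact hall h hh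
      · exact absurd hadj (hnone h0 h0H)
    · intro hall; exact hall h0 h0H
  have atmost : ∀ (x y : W) (i j : Fin k), f x = Sum.inr i → f y = Sum.inr j → x = y := by
    intro x y i j hx hy
    by_contra hne
    have hij : i ≠ j := by
      intro h; exact hne (f.injective (by rw [hx, hy, h]))
    have hadj : X.Adj x y := f.map_rel_iff.mp (by rw [hx, hy]; exact (hFK i j).mpr hij)
    obtain ⟨z, hzx, hzy, hor⟩ := hX x y hadj
    cases hfz : f z with
    | inl v =>
      have e1 : X.Adj z x ↔ ∀ h ∈ H, G.Adj ↑v h := by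
        rw [← f.map_rel_iff, hfz, hx]; exact hFcross v i
      have e2 : X.Adj z y ↔ ∀ h ∈ H, G.Adj ↑v h := by
        rw [← f.map_rel_iff, hfz, hy]; exact hFcross v j
      tauto
    | inr m =>
      have hmi : m ≠ i := by
        intro h; exact hzx (f.injective (by rw [hfz, hx, h]))
      have hmj : m ≠ j := by
        intro h; exact hzy (f.injective (by rw [hfz, hy, h]))
      have a1 : X.Adj z x := f.map_rel_iff.mp (by rw [hfz, hx]; exact (hFK m i).mpr hmi)
      have a2 : X.Adj z y := f.map_rel_iff.mp (by rw [hfz, hy]; exact (hFK m j).mpr hmj)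
      tauto
  set g : W → V := fun x => Sum.elim (fun v : ↥(Hᶜ) => (v : V)) (fun _ : Fin k => h0) (f x) with hg
  have hgadj : ∀ x y : W, G.Adj (g x) (g y) ↔ X.Adj x y := by
    intro x y
    rw [← f.map_rel_iff]
    cases hx : f x with
    | inl u =>
      cases hy : f y with
      | inl u' =>
        simp only [hg, hx, hy, Sum.elim_inl]
        exact (hFout u u').symm
      | inr j =>
        simp only [hg, hx, hy, Sum.elim_inl, Sum.elim_inr]
        rw [hFcross u j]; exact hcrossG u
    | inr i =>
      cases hy : f y with
      | inl u' =>
        simp only [hg, hx, hy, Sum.elim_inl, Sum.elim_inr]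
        rw [G.adj_comm, F.adj_comm, hFcross u' i]; exact hcrossG u'
      | inr j =>
        have hxy : x = y := atmost x y i j hx hy
        subst hxy
        rw [hx] at hy
        simp only [hg, hx, Sum.elim_inr]
        simp [Sum.inr.injEq] at hy
        subst hy
        simp
  have hginj : Function.Injective g := by
    intro x y hxy
    cases hx : f x with
    | inl u =>
      cases hy : f y with
      | inl u' =>
        simp only [hg, hx, hy, Sum.elim_inl] at hxy
        exact f.injective (by rw [hx, hy, Subtype.ext hxy])
      | inr j =>
        simp only [hg, hx, hy, Sum.elim_inl, Sum.elim_inr] at hxy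
        exact absurd (hxy ▸ h0H) (hvH u)
    | inr i =>
      cases hy : f y with
      | inl u' =>
        simp only [hg, hx, hy, Sum.elim_inl, Sum.elim_inr] at hxy
        exact absurd (hxy ▸ h0H) (hvH u')
      | inr j => exact atmost x y i j hx hy
  exact ⟨⟨⟨g, hginj⟩, fun {a b} => hgadj a b⟩⟩

/-- Let `G` be a (banner, odd hole)-free graph with a homogeneous set `H`,
let `k` be a positive integer, and let `F` be the graph obtained from `G` by substituting
a clique `K` on `k` vertices for `H`: the vertex set of `F` is the disjoint union of
`V(G) − H` and `K`, `F` agrees with `G` on `V(G) − H`, `K` is a clique of `F`, and a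
vertex `v ∈ V(G) − H` is adjacent in `F` to the vertices of `K` iff `v` is adjacent in `G`
to the vertices of `H`.  Then `F` is (banner, odd hole)-free. -/
theorem stmt_13 {V : Type*} [Fintype V] (G : SimpleGraph V)
    (hbf : BannerFree G) (hohf : OddHoleFree G)
    (H : Set V) (hH : IsHomogeneous G H)
    (k : ℕ) (hk : 0 < k)
    (F : SimpleGraph (↥(Hᶜ) ⊕ Fin k))
    (hFout : ∀ u v : ↥(Hᶜ), F.Adj (Sum.inl u) (Sum.inl v) ↔ G.Adj ↑u ↑v)
    (hFK : ∀ i j : Fin k, F.Adj (Sum.inr i) (Sum.inr j) ↔ i ≠ j)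
    (hFcross : ∀ (v : ↥(Hᶜ)) (i : Fin k),
      F.Adj (Sum.inl v) (Sum.inr i) ↔ ∀ h ∈ H, G.Adj ↑v h) :
    BannerFree F ∧ OddHoleFree F := by
  constructor
  · rintro ⟨f⟩
    exact hbf (key_transfer hH hFout hFK hFcross banner_edgeDistinguished f)
  · intro n hn hodd
    rintro ⟨f⟩
    exact hohf n hn hodd
      (key_transfer hH hFout hFK hFcross (cycle_edgeDistinguished n hn) f)
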